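/- For a nonconstant real function H that is analytic in a neighborhood of 0, the following two conditions are equivalent: (1) H(0) > 0, H'(0) = 0, and there exists δ > 0 such that H''(x) ≤ 0 for all x with 0 < x < δ; (2) there exist real numbers α > 0, λ > 0 and an integer k ≥ 2 such that H(x) = α(1 − λx^k) + O(x^{k+1}) as x → 0. -/

import Mathlib

open Filter Topology Asymptotics

lemma analyticAt_deriv' (u : ℝ → ℝ) (hu : AnalyticAt ℝ u 0) : AnalyticAt ℝ (deriv u) 0 := by
  have h : AnalyticOnNhd ℝ u {x | AnalyticAt ℝ u x} := fun x hx => hx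
  exact h.deriv 0 hu

lemma aux_deriv' (u : ℝ → ℝ) (hu : AnalyticAt ℝ u 0) (m : ℕ) (c : ℝ) :
    (deriv fun x => c + x ^ (m+1) * u x) =ᶠ[𝓝 (0:ℝ)]
      fun x => x ^ m * ((m+1) * u x + x * deriv u x) := by
  filter_upwards [hu.eventually_analyticAt] with x hx
  have hd : HasDerivAt u (deriv u x) x := hx.differentiableAt.hasDerivAt
  have h : HasDerivAt (fun y : ℝ => c + y ^ (m+1) * u y)
      ((↑(m+1) * x ^ (m+1-1)) * u x + x^(m+1) * deriv u x) x :=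
    ((hasDerivAt_pow (m+1) x).mul hd).const_add c
  rw [h.deriv]
  simp only [Nat.add_sub_cancel]
  push_cast
  ring

lemma factor_exists' (H : ℝ → ℝ) (hH : AnalyticAt ℝ H 0)
    (hnc : ¬ ∃ c : ℝ, ∀ᶠ x in 𝓝 (0 : ℝ), H x = c) :
    ∃ (n : ℕ) (g : ℝ → ℝ), 1 ≤ n ∧ AnalyticAt ℝ g 0 ∧ g 0 ≠ 0 ∧
      ∀ᶠ x in 𝓝 (0:ℝ), H x = H 0 + x ^ n * g x := by
  have hf : AnalyticAt ℝ (fun x => H x - H 0) 0 := hH.sub analyticAt_const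
  have hne : ¬ (analyticOrderAt (fun x => H x - H 0) 0 = ⊤) := by
    rw [analyticOrderAt_eq_top]
    intro h
    exact hnc ⟨H 0, h.mono fun x hx => by linarith [sub_eq_zero.mp hx]⟩
  obtain ⟨n, hn⟩ := ENat.ne_top_iff_exists.mp hne
  obtain ⟨g, hg, hg0, hfac⟩ := hf.analyticOrderAt_eq_natCast.mp hn.symm
  have hfac' : ∀ᶠ x in 𝓝 (0:ℝ), H x = H 0 + x ^ n * g x := by
    filter_upwards [hfac] with x hx
    simp only [sub_zero, smul_eq_mul] at hx
    linarith
  refine ⟨n, g, ?_, hg, hg0, hfac'⟩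
  by_contra h
  have hn0 : n = 0 := by omega
  have := hfac'.self_of_nhds
  simp [hn0] at this
  exact hg0 (by linarith)

lemma derivs' (H g : ℝ → ℝ) (hg : AnalyticAt ℝ g 0) (m : ℕ) (c : ℝ)
    (hHg : ∀ᶠ x in 𝓝 (0:ℝ), H x = c + x ^ (m+2) * g x) :
    deriv H 0 = 0 ∧ ∃ w : ℝ → ℝ, AnalyticAt ℝ w 0 ∧ w 0 = ((m:ℝ)+2)*((m:ℝ)+1)*(g 0) ∧
      deriv (deriv H) =ᶠ[𝓝 (0:ℝ)] fun x => x ^ m * w x := by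
  set v : ℝ → ℝ := fun x => ((m:ℝ)+1+1) * g x + x * deriv g x with hv
  have hva : AnalyticAt ℝ v 0 :=
    (analyticAt_const.mul hg).add (analyticAt_id.mul (analyticAt_deriv' g hg))
  have e1 : deriv H =ᶠ[𝓝 (0:ℝ)] fun x => x ^ (m+1) * v x := by
    refine (Filter.EventuallyEq.deriv hHg).trans ?_
    have := aux_deriv' g hg (m+1) c
    refine this.trans (Filter.EventuallyEq.of_eq ?_)
    funext x
    simp only [hv]
    push_cast
    ring
  have e1' : deriv H =ᶠ[𝓝 (0:ℝ)] fun x => (0:ℝ) + x ^ (m+1) * v x := by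
    simpa using e1
  have hd0 : deriv H 0 = 0 := by
    have := e1.self_of_nhds
    simp at this
    exact this
  set w : ℝ → ℝ := fun x => ((m:ℝ)+1) * v x + x * deriv v x with hw
  have hwa : AnalyticAt ℝ w 0 :=
    (analyticAt_const.mul hva).add (analyticAt_id.mul (analyticAt_deriv' v hva))
  have e2 : deriv (deriv H) =ᶠ[𝓝 (0:ℝ)] fun x => x ^ m * w x := by
    refine (Filter.EventuallyEq.deriv e1').trans ?_
    exact aux_deriv' v hva m 0
  refine ⟨hd0, w, hwa, ?_, e2⟩
  simp only [hw, hv]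
  ring

lemma tendsto_div_pow' (E : ℝ → ℝ) (k m : ℕ) (hm : m ≤ k)
    (hO : E =O[𝓝[≠] (0:ℝ)] fun x => x ^ (k+1)) :
    Tendsto (fun x => E x / x ^ m) (𝓝[≠] (0:ℝ)) (𝓝 0) := by
  have h1 := hO.mul (isBigO_refl (fun x : ℝ => (x ^ m)⁻¹) (𝓝[≠] (0:ℝ)))
  have hf : (fun x => E x * (x ^ m)⁻¹) =ᶠ[𝓝[≠] (0:ℝ)] fun x => E x / x ^ m := by
    filter_upwards with x; rw [div_eq_mul_inv]
  have hgg : (fun x : ℝ => x ^ (k+1) * (x ^ m)⁻¹) =ᶠ[𝓝[≠] (0:ℝ)] fun x => x ^ (k+1-m) := by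
    filter_upwards [self_mem_nhdsWithin] with x hx
    rw [pow_sub₀ x hx (by omega)]
  have h2 : (fun x => E x / x ^ m) =O[𝓝[≠] (0:ℝ)] fun x => x ^ (k+1-m) := h1.congr' hf hgg
  refine h2.trans_tendsto ?_
  have : Tendsto (fun x : ℝ => x ^ (k+1-m)) (𝓝 0) (𝓝 ((0:ℝ) ^ (k+1-m))) :=
    (continuous_pow _).tendsto 0
  rw [zero_pow (by omega)] at this
  exact this.mono_left nhdsWithin_le_nhds

/-- **Proposition 3 (C-functions).** For a nonconstant real function `H`, analytic
at `0`, the following are equivalent: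
(1) `H 0 > 0`, `H' 0 = 0`, and `H'' x ≤ 0` for positive `x` close to `0`;
(2) there are reals `α, λ > 0` and an integer `k ≥ 2` such that
`H x = α * (1 - λ * x ^ k) + O (x ^ (k + 1))` as `x → 0`. -/
theorem stmt_1 (H : ℝ → ℝ) (hH : AnalyticAt ℝ H 0)
    (hnc : ¬ ∃ c : ℝ, ∀ᶠ x in 𝓝 (0 : ℝ), H x = c) :
    (0 < H 0 ∧ deriv H 0 = 0 ∧
        ∃ δ > 0, ∀ x : ℝ, 0 < x → x < δ → deriv (deriv H) x ≤ 0) ↔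
      (∃ (α lam : ℝ) (k : ℕ), 0 < α ∧ 0 < lam ∧ 2 ≤ k ∧
        (fun x : ℝ => H x - α * (1 - lam * x ^ k)) =O[𝓝[≠] (0 : ℝ)]
          fun x : ℝ => x ^ (k + 1)) := by
  obtain ⟨n, g, hn1, hg, hg0, hfac⟩ := factor_exists' H hH hnc
  constructor
  · rintro ⟨hpos, hd0, δ₀, hδ₀, hcc⟩
    -- first show `2 ≤ n`
    have hn2 : 2 ≤ n := by
      by_contra h
      have hn1' : n = 1 := by omega
      rw [hn1'] at hfac
      have e := (Filter.EventuallyEq.deriv hfac).trans (aux_deriv' g hg 0 (H 0))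
      have := e.self_of_nhds
      rw [hd0] at this
      simp at this
      exact hg0 this.symm
    obtain ⟨p, hp⟩ : ∃ p, n = p + 2 := ⟨n - 2, by omega⟩
    rw [hp] at hfac
    obtain ⟨-, w, hwa, hw0, e2⟩ := derivs' H g hg p (H 0) hfac
    -- show `g 0 < 0`
    have hwle : ∀ᶠ x in 𝓝[>] (0:ℝ), w x ≤ 0 := by
      have hmem : Set.Ioo (0:ℝ) δ₀ ∈ 𝓝[>] (0:ℝ) :=
        Ioo_mem_nhdsGT_of_mem (by constructor <;> simp [hδ₀])
      filter_upwards [e2.filter_mono nhdsWithin_le_nhds, hmem] with x hx hxm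
      have hxp : (0:ℝ) < x ^ p := pow_pos hxm.1 p
      have h1 : x ^ p * w x ≤ 0 := by rw [← hx]; exact hcc x hxm.1 hxm.2
      by_contra hwp
      push_neg at hwp
      nlinarith
    have hw0le : w 0 ≤ 0 := by
      have ht : Tendsto w (𝓝[>] (0:ℝ)) (𝓝 (w 0)) :=
        hwa.continuousAt.tendsto.mono_left nhdsWithin_le_nhds
      exact le_of_tendsto ht hwle
    have hg0lt : g 0 < 0 := by
      rcases hg0.lt_or_gt with h | h
      · exact h
      · exfalso
        rw [hw0] at hw0le
        have hq : (0:ℝ) < ((p:ℝ)+2)*((p:ℝ)+1) := by positivity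
        nlinarith
    -- construct the asymptotic expansion
    refine ⟨H 0, -(g 0) / H 0, p + 2, hpos, div_pos (by linarith) hpos, by omega, ?_⟩
    have hEq : (fun x : ℝ => H x - H 0 * (1 - (-(g 0) / H 0) * x ^ (p+2)))
        =ᶠ[𝓝 (0:ℝ)] fun x => x ^ (p+2) * (g x - g 0) := by
      filter_upwards [hfac] with x hx
      rw [hx]
      field_simp
      ring
    have hBig : (fun x : ℝ => x ^ (p+2) * (g x - g 0)) =O[𝓝 (0:ℝ)] fun x => x ^ (p+2+1) := by
      have h1 : (fun x : ℝ => g x - g 0) =O[𝓝 (0:ℝ)] fun x => x := by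
        simpa using hg.differentiableAt.isBigO_sub
      have h2 := (isBigO_refl (fun x : ℝ => x ^ (p+2)) (𝓝 (0:ℝ))).mul h1
      simpa [← pow_succ] using h2
    exact ((hEq.filter_mono nhdsWithin_le_nhds).trans_isBigO
      (hBig.mono nhdsWithin_le_nhds))
  · rintro ⟨α, lam, k, hα, hlam, hk, hO⟩
    set E : ℝ → ℝ := fun x => H x - α * (1 - lam * x ^ k) with hE
    -- `H 0 = α`
    have htail : Tendsto (fun x : ℝ => x ^ (k+1)) (𝓝[≠] (0:ℝ)) (𝓝 0) := by
      have : Tendsto (fun x : ℝ => x ^ (k+1)) (𝓝 0) (𝓝 ((0:ℝ) ^ (k+1))) :=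
        (continuous_pow _).tendsto 0
      rw [zero_pow (by omega)] at this
      exact this.mono_left nhdsWithin_le_nhds
    have hE0 : Tendsto E (𝓝[≠] (0:ℝ)) (𝓝 0) := hO.trans_tendsto htail
    have hφ : Tendsto (fun x : ℝ => α * (1 - lam * x ^ k)) (𝓝 (0:ℝ)) (𝓝 α) := by
      have hc : Continuous fun x : ℝ => α * (1 - lam * x ^ k) := by continuity
      have := hc.tendsto 0
      simpa [zero_pow (by omega : k ≠ 0)] using this
    have hHα : H 0 = α := by
      have t1 : Tendsto H (𝓝[≠] (0:ℝ)) (𝓝 (0 + α)) := by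
        have := hE0.add (hφ.mono_left nhdsWithin_le_nhds)
        refine this.congr fun x => ?_
        simp [hE]
      have t2 : Tendsto H (𝓝[≠] (0:ℝ)) (𝓝 (H 0)) :=
        hH.continuousAt.tendsto.mono_left nhdsWithin_le_nhds
      have := tendsto_nhds_unique t2 t1
      linarith
    -- determine the limit of `E x / x ^ (min n k)`
    set m := min n k with hm
    have hmn : m ≤ n := min_le_left n k
    have hmk : m ≤ k := min_le_right n k
    have hform : (fun x => E x / x ^ m)
        =ᶠ[𝓝[≠] (0:ℝ)] fun x => x ^ (n-m) * g x + α * lam * x ^ (k-m) := by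
      filter_upwards [hfac.filter_mono nhdsWithin_le_nhds, self_mem_nhdsWithin] with x hx hx0
      have hx0' : x ≠ 0 := hx0
      have h1 : x ^ (n-m) * x ^ m = x ^ n := by rw [← pow_add, Nat.sub_add_cancel hmn]
      have h2 : x ^ (k-m) * x ^ m = x ^ k := by rw [← pow_add, Nat.sub_add_cancel hmk]
      have hEx : E x = x ^ n * g x + α * lam * x ^ k := by
        simp only [hE]
        rw [hx, hHα]
        ring
      rw [hEx, div_eq_iff (pow_ne_zero m hx0')]
      linear_combination (-(g x)) * h1 - α * lam * h2
    set L : ℝ := (0:ℝ) ^ (n-m) * g 0 + α * lam * (0:ℝ) ^ (k-m) with hL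
    have T1 : Tendsto (fun x => E x / x ^ m) (𝓝[≠] (0:ℝ)) (𝓝 L) := by
      have hcont : Tendsto (fun x : ℝ => x ^ (n-m) * g x + α * lam * x ^ (k-m))
          (𝓝 (0:ℝ)) (𝓝 L) := by
        refine Tendsto.add ?_ ?_
        · exact ((continuous_pow (n-m)).continuousAt.tendsto).mul hg.continuousAt.tendsto
        · exact (continuousAt_const.mul (continuous_pow (k-m)).continuousAt).tendsto
      exact (hcont.mono_left nhdsWithin_le_nhds).congr' hform.symm
    have T2 : Tendsto (fun x => E x / x ^ m) (𝓝[≠] (0:ℝ)) (𝓝 0) :=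
      tendsto_div_pow' E k m hmk hO
    have hL0 : L = 0 := tendsto_nhds_unique T1 T2
    -- conclude `n = k` and `g 0 = -(α * lam)`
    have hnk : n = k := by
      rcases lt_trichotomy n k with h | h | h
      · exfalso
        have hm' : m = n := min_eq_left h.le
        rw [hL, hm', Nat.sub_self] at hL0
        rw [zero_pow (by omega : k - n ≠ 0)] at hL0
        simp at hL0
        exact hg0 (by linarith)
      · exact h
      · exfalso
        have hm' : m = k := min_eq_right h.le
        rw [hL, hm', Nat.sub_self] at hL0
        rw [zero_pow (by omega : n - k ≠ 0)] at hL0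
        simp at hL0
        rcases hL0 with h' | h' <;> nlinarith
    have hg0' : g 0 = -(α * lam) := by
      have hm' : m = k := by rw [hm, hnk, min_self]
      rw [hL, hm', hnk, Nat.sub_self] at hL0
      simp at hL0
      linarith
    have hg0lt : g 0 < 0 := by rw [hg0']; nlinarith
    -- now use the second-derivative structure
    obtain ⟨p, hp⟩ : ∃ p, n = p + 2 := ⟨n - 2, by omega⟩
    rw [hp] at hfac
    obtain ⟨hd0, w, hwa, hw0, e2⟩ := derivs' H g hg p (H 0) hfac
    refine ⟨by rw [hHα]; exact hα, hd0, ?_⟩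
    have hw0lt : w 0 < 0 := by
      rw [hw0]
      have hq : (0:ℝ) < ((p:ℝ)+2)*((p:ℝ)+1) := by positivity
      nlinarith
    have hwlt : ∀ᶠ x in 𝓝 (0:ℝ), w x < 0 :=
      hwa.continuousAt.eventually_lt continuousAt_const hw0lt
    have hboth := e2.and hwlt
    rw [Metric.eventually_nhds_iff] at hboth
    obtain ⟨δ, hδ, hball⟩ := hboth
    refine ⟨δ, hδ, fun x hx1 hx2 => ?_⟩
    have hdist : dist x 0 < δ := by
      rw [Real.dist_eq, sub_zero, abs_of_pos hx1]; exact hx2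
    obtain ⟨heq, hwx⟩ := hball hdist
    rw [heq]
    exact mul_nonpos_of_nonneg_of_nonpos (pow_nonneg hx1.le p) hwx.le
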